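/- arXiv:1808.08791 — 2 statements merged into one kernel-verified Lean document; each statement's English description precedes it below -/
import Mathlib

section
/- Let Ω₁, ..., Ω_K ∈ ℝ^{v×v} be matrices and u ∈ ℝᵛ. Then the joint minimum over k ∈ {1,...,K} and z ∈ ℝᵛ of ‖Ω_k u − z‖₂² + γ²‖z‖₀ is achieved by first hard-thresholding each Ω_k u with threshold γ and then picking the class k minimizing Σᵢ min((Ω_k u)ᵢ², γ²); i.e., the clustering-and-sparse-coding subproblem has an exact closed-form solution. -/
open scoped Classical
open Matrix

theorem stmt4 (K v : ℕ) (Ω : Fin K → Matrix (Fin v) (Fin v) ℝ) (u : Fin v → ℝ)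
    (γ : ℝ) (hγ : 0 < γ)
    (cost : Fin K → (Fin v → ℝ) → ℝ)
    (hcost : ∀ k z, cost k z = ∑ i, (((Ω k) *ᵥ u) i - z i) ^ 2 +
      γ ^ 2 * ((Finset.univ.filter (fun i => z i ≠ 0)).card : ℝ))
    (Hγ : (Fin v → ℝ) → (Fin v → ℝ))
    (hH : ∀ w i, Hγ w i = if γ < |w i| then w i else 0)
    (khat : Fin K)
    (hkhat : ∀ k, ∑ i, min ((((Ω khat) *ᵥ u) i) ^ 2) (γ ^ 2) ≤
      ∑ i, min ((((Ω k) *ᵥ u) i) ^ 2) (γ ^ 2)) :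
    ∀ k z, cost khat (Hγ ((Ω khat) *ᵥ u)) ≤ cost k z := by
  -- key: cost k z rewritten as sum over coordinates
  have key : ∀ (k : Fin K) (z : Fin v → ℝ),
      cost k z = ∑ i, ((((Ω k) *ᵥ u) i - z i) ^ 2 +
        γ ^ 2 * (if z i ≠ 0 then (1:ℝ) else 0)) := by
    intro k z
    rw [hcost, Finset.sum_add_distrib, ← Finset.mul_sum]
    congr 1
    rw [Finset.card_filter]
    push_cast
    congr 1
  intro k z
  rw [key, key]
  have lower : ∀ (k : Fin K) (z : Fin v → ℝ),
      ∑ i, min ((((Ω k) *ᵥ u) i) ^ 2) (γ ^ 2) ≤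
      ∑ i, ((((Ω k) *ᵥ u) i - z i) ^ 2 +
        γ ^ 2 * (if z i ≠ 0 then (1:ℝ) else 0)) := by
    intro k z
    apply Finset.sum_le_sum
    intro i _
    by_cases h : z i = 0
    · simp [h]
    · rw [if_pos h]
      nlinarith [min_le_right ((((Ω k) *ᵥ u) i)^2) (γ^2), sq_nonneg ((((Ω k) *ᵥ u) i - z i))]
  have eq1 : ∑ i, ((((Ω khat) *ᵥ u) i - Hγ ((Ω khat) *ᵥ u) i) ^ 2 +
        γ ^ 2 * (if Hγ ((Ω khat) *ᵥ u) i ≠ 0 then (1:ℝ) else 0)) =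
      ∑ i, min ((((Ω khat) *ᵥ u) i) ^ 2) (γ ^ 2) := by
    apply Finset.sum_congr rfl
    intro i _
    rw [hH]
    set w := ((Ω khat) *ᵥ u) i with hw
    by_cases h : γ < |w|
    · have hne : w ≠ 0 := by
        intro h0; rw [h0] at h; simp at h; linarith
      simp [h, hne]
      nlinarith [abs_nonneg w, sq_abs w]
    · simp [h]
      push_neg at h
      nlinarith [abs_nonneg w, sq_abs w]
  rw [eq1]
  exact le_trans (hkhat k) (lower k z)
end

section
/- The shifted-Poisson data-fidelity function h(l) = (I₀e^{-l} + σ²) − Y log(I₀e^{-l} + σ²) is nonconvex on ℝ whenever σ² > 0 and Y > σ²: specifically its second derivative h''(l) = I₀e^{-l}·[1 − Y σ²/(I₀e^{-l}+σ²)²] changes sign, being negative for l large enough that (I₀e^{-l}+σ²)² < Yσ². -/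
lemma monotone_hasDerivAt_nonneg {f : ℝ → ℝ} {c x : ℝ} (hf : Monotone f)
    (hd : HasDerivAt f c x) : 0 ≤ c := by
  have ht := hasDerivAt_iff_tendsto_slope.mp hd
  have ht' : Filter.Tendsto (slope f x) (nhdsWithin x (Set.Ioi x)) (nhds c) :=
    ht.mono_left (nhdsWithin_mono x (fun y hy => ne_of_gt hy))
  refine ge_of_tendsto ht' ?_
  filter_upwards [self_mem_nhdsWithin] with y hy
  rw [slope_def_field]
  exact div_nonneg (sub_nonneg.mpr (hf (le_of_lt hy))) (sub_nonneg.mpr (le_of_lt hy))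

theorem stmt9 (I0 s2 Y : ℝ) (hI0 : 0 < I0) (hs2 : 0 < s2) (hY : s2 < Y)
    (g h : ℝ → ℝ)
    (hg : ∀ l, g l = I0 * Real.exp (-l) + s2)
    (hh : ∀ l, h l = g l - Y * Real.log (g l)) :
    (∀ l, deriv (deriv h) l =
        I0 * Real.exp (-l) * (1 - Y * s2 / (I0 * Real.exp (-l) + s2) ^ 2)) ∧
    (∀ l, (I0 * Real.exp (-l) + s2) ^ 2 < Y * s2 → deriv (deriv h) l < 0) ∧
    ¬ ConvexOn ℝ Set.univ h := by
  have hEpos : ∀ l : ℝ, 0 < I0 * Real.exp (-l) := fun l =>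
    mul_pos hI0 (Real.exp_pos _)
  have hGpos : ∀ l : ℝ, 0 < I0 * Real.exp (-l) + s2 := fun l =>
    add_pos (hEpos l) hs2
  -- derivative of E l = I0 * exp (-l)
  have hE : ∀ l : ℝ, HasDerivAt (fun l => I0 * Real.exp (-l))
      (-(I0 * Real.exp (-l))) l := by
    intro l
    have h1 : HasDerivAt (fun l : ℝ => -l) (-1) l := (hasDerivAt_id l).neg
    have h2 : HasDerivAt (fun l : ℝ => Real.exp (-l)) (Real.exp (-l) * (-1)) l :=
      (Real.hasDerivAt_exp (-l)).comp l h1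
    have h3 := h2.const_mul I0
    refine h3.congr_deriv ?_
    ring
  -- derivative of h
  have hd1 : ∀ l : ℝ, HasDerivAt h
      (-(I0 * Real.exp (-l)) + Y * (I0 * Real.exp (-l)) / (I0 * Real.exp (-l) + s2)) l := by
    intro l
    have hgfun : g = fun l => I0 * Real.exp (-l) + s2 := funext hg
    have hhfun : h = fun l => (I0 * Real.exp (-l) + s2)
        - Y * Real.log (I0 * Real.exp (-l) + s2) := by
      funext x; rw [hh x, hg x]
    have hG : HasDerivAt (fun l => I0 * Real.exp (-l) + s2)
        (-(I0 * Real.exp (-l))) l := (hE l).add_const s2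
    have hlog : HasDerivAt (fun l => Real.log (I0 * Real.exp (-l) + s2))
        (-(I0 * Real.exp (-l)) / (I0 * Real.exp (-l) + s2)) l :=
      hG.log (ne_of_gt (hGpos l))
    have := hG.sub (hlog.const_mul Y)
    rw [hhfun]
    refine this.congr_deriv ?_
    field_simp
    ring
  have hderiv1 : deriv h = fun l =>
      -(I0 * Real.exp (-l)) + Y * (I0 * Real.exp (-l)) / (I0 * Real.exp (-l) + s2) := by
    funext l; exact (hd1 l).deriv
  -- second derivative
  have hd2 : ∀ l : ℝ, HasDerivAt (deriv h)
      (I0 * Real.exp (-l) * (1 - Y * s2 / (I0 * Real.exp (-l) + s2) ^ 2)) l := by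
    intro l
    rw [hderiv1]
    have hG : HasDerivAt (fun l => I0 * Real.exp (-l) + s2)
        (-(I0 * Real.exp (-l))) l := (hE l).add_const s2
    have hnum : HasDerivAt (fun l => Y * (I0 * Real.exp (-l)))
        (Y * -(I0 * Real.exp (-l))) l := (hE l).const_mul Y
    have hdiv := hnum.div hG (ne_of_gt (hGpos l))
    have := ((hE l).neg).add hdiv
    refine this.congr_deriv ?_
    have hGne : I0 * Real.exp (-l) + s2 ≠ 0 := ne_of_gt (hGpos l)
    field_simp
    ring
  have hderiv2 : ∀ l : ℝ, deriv (deriv h) l =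
      I0 * Real.exp (-l) * (1 - Y * s2 / (I0 * Real.exp (-l) + s2) ^ 2) :=
    fun l => (hd2 l).deriv
  refine ⟨hderiv2, ?_, ?_⟩
  · -- part 2
    intro l hl
    rw [hderiv2 l]
    have h1 : 1 < Y * s2 / (I0 * Real.exp (-l) + s2) ^ 2 :=
      (one_lt_div (pow_pos (hGpos l) 2)).mpr hl
    have : 1 - Y * s2 / (I0 * Real.exp (-l) + s2) ^ 2 < 0 := by linarith
    exact mul_neg_of_pos_of_neg (hEpos l) this
  · -- part 3 : nonconvexity
    intro hc
    have hdiff : ∀ x ∈ (Set.univ : Set ℝ), DifferentiableAt ℝ h x :=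
      fun x _ => (hd1 x).differentiableAt
    have hmono : Monotone (deriv h) :=
      monotoneOn_univ.mp (hc.monotoneOn_deriv hdiff)
    -- pick a point where the second derivative is negative
    set ε := Real.sqrt (Y * s2) - s2 with hε
    have hYs2 : 0 < Y * s2 := mul_pos (lt_trans hs2 hY) hs2
    have hsqrt : s2 < Real.sqrt (Y * s2) := by
      refine (Real.lt_sqrt hs2.le).mpr ?_
      nlinarith
    have hεpos : 0 < ε := by simp [hε]; linarith
    set l0 := Real.log (I0 / ε) + 1 with hl0
    have hEsmall : I0 * Real.exp (-l0) < ε := by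
      have : Real.exp (-l0) = (ε / I0) * Real.exp (-1) := by
        rw [hl0, neg_add, Real.exp_add, Real.exp_neg, Real.exp_log (div_pos hI0 hεpos)]
        rw [inv_div]
      rw [this]
      have he1 : Real.exp (-1 : ℝ) < 1 := Real.exp_lt_one_iff.mpr (by norm_num)
      have : I0 * (ε / I0 * Real.exp (-1)) = ε * Real.exp (-1) := by
        field_simp
      rw [this]
      nlinarith
    have hG2 : (I0 * Real.exp (-l0) + s2) ^ 2 < Y * s2 := by
      have h1 : I0 * Real.exp (-l0) + s2 < Real.sqrt (Y * s2) := by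
        simp only [hε] at hEsmall; linarith
      have h2 : 0 < I0 * Real.exp (-l0) + s2 := hGpos l0
      nlinarith [Real.sq_sqrt hYs2.le]
    have hneg : deriv (deriv h) l0 < 0 := by
      rw [hderiv2 l0]
      have h1 : 1 < Y * s2 / (I0 * Real.exp (-l0) + s2) ^ 2 :=
        (one_lt_div (pow_pos (hGpos l0) 2)).mpr hG2
      have : 1 - Y * s2 / (I0 * Real.exp (-l0) + s2) ^ 2 < 0 := by linarith
      exact mul_neg_of_pos_of_neg (hEpos l0) this
    have hnn : 0 ≤ deriv (deriv h) l0 := by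
      rw [hderiv2 l0]
      exact monotone_hasDerivAt_nonneg hmono (hd2 l0)
    linarith
end
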